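/- Let A be a finite set, a ∈ A, N ≥ 1, and let Z be a random element of A^N whose law is invariant under a-block permutations: for every z ∈ A^N in which a occurs at least twice and every permutation σ of the a-blocks of z, P(Z = z) = P(Z = σ·z). Assume a occurs at least twice in Z almost surely, let d(z) denote the number of a-blocks of z, and for each integer d ≥ 1 fix a subgroup Π_d of the symmetric group on d elements. Let S : A^N → ℝ be any function such that almost surely the values { S(π·Z) : π ∈ Π_{d(Z)} } are pairwise distinct, and define q(Z) = (1/|Π_{d(Z)}|) · Σ_{π ∈ Π_{d(Z)}} 1{ S(π·Z) ≥ S(Z) }. Then for every α ∈ (0,1): (i) P( q(Z) > α ) ≥ 1 − α; and (ii) if additionally there is an integer m ≥ 1 with |Π_{d(Z)}| ≥ m almost surely, then P( q(Z) > α ) ≤ 1 − α + 1/m. -/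

import Mathlib

open MeasureTheory

variable {A : Type*} [DecidableEq A]

/-- Split a list (assumed to begin with `a`) into its maximal segments each beginning
with `a` and containing no further `a`. -/
def aSegments (a : A) : List A → List (List A)
  | [] => []
  | x :: xs =>
    (x :: xs.takeWhile (· ≠ a)) :: aSegments a (xs.dropWhile (· ≠ a))
  termination_by l => l.length
  decreasing_by
    simp only [List.length_cons]
    exact Nat.lt_succ_of_le (List.dropWhile_sublist _).length_le

/-- The number of `a`-blocks of `z`: if `a` occurs `d` times in `z`, the `a`-blocks are the
segments between consecutive occurrences of `a`, of which there are `d - 1`. -/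
def numABlocks (a : A) (z : List A) : ℕ := z.count a - 1

/-- The `a`-block permutation of `z` by `σ`: the prefix before the first occurrence of `a`
and the suffix starting at the last occurrence of `a` are kept fixed, and the `a`-blocks in
between are concatenated in the order prescribed by `σ`. -/
def blockPermute (a : A) (z : List A) (σ : Equiv.Perm (Fin (numABlocks a z))) : List A :=
  z.takeWhile (· ≠ a) ++
    (List.ofFn fun k : Fin (numABlocks a z) =>
        (aSegments a (z.dropWhile (· ≠ a))).getD (σ k).val []).flatten ++
    (aSegments a (z.dropWhile (· ≠ a))).getD (numABlocks a z) []

namespace BWAux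

open List
set_option linter.unusedSectionVars false

theorem aSegments_cons (a : A) (x : A) (xs : List A) :
    aSegments a (x :: xs) =
      (x :: xs.takeWhile (· ≠ a)) :: aSegments a (xs.dropWhile (· ≠ a)) := by
  rw [aSegments]

theorem my_takeWhile_append (a : A) (t r : List A) (h : a ∉ t) :
    (t ++ r).takeWhile (· ≠ a) = t ++ r.takeWhile (· ≠ a) := by
  induction t with
  | nil => simp
  | cons x xs ih =>
      simp only [mem_cons, not_or] at h
      have hxa : ¬ x = a := fun hx => h.1 hx.symm
      simp [takeWhile_cons, hxa]
      simpa using ih h.2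

theorem my_dropWhile_append (a : A) (t r : List A) (h : a ∉ t) :
    (t ++ r).dropWhile (· ≠ a) = r.dropWhile (· ≠ a) := by
  induction t with
  | nil => simp
  | cons x xs ih =>
      simp only [mem_cons, not_or] at h
      have hxa : ¬ x = a := fun hx => h.1 hx.symm
      simp [dropWhile_cons, hxa]
      simpa using ih h.2

theorem flatten_aSegments_aux (a : A) : ∀ (n : ℕ) (l : List A), l.length ≤ n →
    (aSegments a l).flatten = l := by
  intro n
  induction n with
  | zero => intro l hl; rw [List.length_eq_zero_iff.mp (Nat.le_zero.mp hl)]; simp [aSegments]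
  | succ n ih =>
      intro l hl
      cases l with
      | nil => simp [aSegments]
      | cons x xs =>
          rw [aSegments_cons]
          simp only [flatten_cons, cons_append]
          rw [ih _ (le_trans (List.dropWhile_sublist _).length_le (Nat.le_of_succ_le_succ hl))]
          simp [takeWhile_append_dropWhile]

theorem flatten_aSegments (a : A) (l : List A) : (aSegments a l).flatten = l :=
  flatten_aSegments_aux a l.length l le_rfl

def GoodSeg (a : A) (s : List A) : Prop := ∃ t, s = a :: t ∧ a ∉ t

theorem dropWhile_ne_eq_cons (a : A) : ∀ (l : List A) (y : A) (ys : List A),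
    l.dropWhile (· ≠ a) = y :: ys → y = a := by
  intro l
  induction l with
  | nil => intro y ys h; simp at h
  | cons x xs ih =>
      intro y ys h
      by_cases hx : x = a
      · subst hx
        simp [dropWhile_cons] at h
        exact h.1.symm
      · have hp : (fun x => decide (x ≠ a)) x = true := by simpa using hx
        rw [List.dropWhile_cons_of_pos (p := fun x => decide (x ≠ a)) (l := xs) (a := x) hp] at h
        exact ih y ys h

theorem good_aSegments_aux (a : A) : ∀ (n : ℕ) (l : List A), l.length ≤ n →
    (l = [] ∨ ∃ t, l = a :: t) → ∀ s ∈ aSegments a l, GoodSeg a s := by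
  intro n
  induction n with
  | zero => intro l hl _; rw [List.length_eq_zero_iff.mp (Nat.le_zero.mp hl)]; simp [aSegments]
  | succ n ih =>
      intro l hl hform s hs
      rcases hform with rfl | ⟨t, rfl⟩
      · simp [aSegments] at hs
      · rw [aSegments_cons] at hs
        rw [mem_cons] at hs
        rcases hs with hs | hs
        · subst hs
          exact ⟨_, rfl, fun hmem => by
            have := List.mem_takeWhile_imp hmem
            simp at this⟩
        · refine ih _ (le_trans (List.dropWhile_sublist _).length_le (Nat.le_of_succ_le_succ hl)) ?_ s hs
          rcases hd : t.dropWhile (· ≠ a) with _ | ⟨y, ys⟩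
          · exact Or.inl rfl
          · refine Or.inr ⟨ys, ?_⟩
            have hy := dropWhile_ne_eq_cons a t y ys hd
            rw [hy]

theorem good_aSegments (a : A) (t : List A) : ∀ s ∈ aSegments a (a :: t), GoodSeg a s :=
  good_aSegments_aux a _ _ le_rfl (Or.inr ⟨t, rfl⟩)

theorem aSegments_flatten_good (a : A) : ∀ (L : List (List A)), (∀ s ∈ L, GoodSeg a s) →
    aSegments a L.flatten = L := by
  intro L
  induction L with
  | nil => simp [aSegments]
  | cons s L ih =>
      intro h
      obtain ⟨t, rfl, hat⟩ := h _ mem_cons_self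
      have hL : ∀ s ∈ L, GoodSeg a s := fun s hs => h s (mem_cons_of_mem _ hs)
      simp only [flatten_cons, cons_append]
      rw [aSegments_cons]
      have htw : (t ++ L.flatten).takeWhile (· ≠ a) = t := by
        rw [my_takeWhile_append a t _ hat]
        rcases L with _ | ⟨s', L'⟩
        · simp
        · obtain ⟨t', rfl, _⟩ := hL _ mem_cons_self
          simp [takeWhile_cons]
      have hdw : (t ++ L.flatten).dropWhile (· ≠ a) = L.flatten := by
        rw [my_dropWhile_append a t _ hat]
        rcases L with _ | ⟨s', L'⟩
        · simp
        · obtain ⟨t', rfl, _⟩ := hL _ mem_cons_self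
          simp [dropWhile_cons]
      rw [htw, hdw, ih hL]

theorem count_flatten_good (a : A) : ∀ (L : List (List A)), (∀ s ∈ L, GoodSeg a s) →
    L.flatten.count a = L.length := by
  intro L
  induction L with
  | nil => simp
  | cons s L ih =>
      intro h
      obtain ⟨t, rfl, hat⟩ := h _ mem_cons_self
      simp only [flatten_cons, length_cons, count_append, count_cons_self]
      rw [ih (fun s hs => h s (mem_cons_of_mem _ hs)), List.count_eq_zero.mpr hat]
      omega

theorem exists_dropWhile_eq (a : A) (l : List A) (h : a ∈ l) :
    ∃ t, l.dropWhile (· ≠ a) = a :: t := by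
  induction l with
  | nil => simp at h
  | cons x xs ih =>
      by_cases hx : x = a
      · subst hx; exact ⟨xs, by simp [dropWhile_cons]⟩
      · rw [mem_cons] at h
        rcases h with h | h
        · exact absurd h.symm hx
        · have hp : (fun x => decide (x ≠ a)) x = true := by simpa using hx
          rw [List.dropWhile_cons_of_pos (p := fun x => decide (x ≠ a)) (l := xs) (a := x) hp]
          exact ih h

/-! ### blockPermute layer -/

def pc {d d' : ℕ} (h : d = d') (σ : Equiv.Perm (Fin d)) : Equiv.Perm (Fin d') :=
  (finCongr h).permCongr σ

@[simp] theorem pc_rfl {d : ℕ} (σ : Equiv.Perm (Fin d)) : pc rfl σ = σ := by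
  ext k; simp [pc]

/-- The list of segments of `z`. -/
def segList (a : A) (z : List A) : List (List A) := aSegments a (z.dropWhile (· ≠ a))

theorem takeWhile_not_mem (a : A) (z : List A) : a ∉ z.takeWhile (· ≠ a) := by
  intro h
  have := List.mem_takeWhile_imp h
  simp at this

theorem segList_good (a : A) (z : List A) (hz : 1 ≤ z.count a) :
    ∀ s ∈ segList a z, GoodSeg a s := by
  obtain ⟨t, ht⟩ := exists_dropWhile_eq a z (List.count_pos_iff.mp hz)
  rw [segList, ht]
  exact good_aSegments a t

theorem segList_flatten (a : A) (z : List A) :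
    (segList a z).flatten = z.dropWhile (· ≠ a) := flatten_aSegments a _

theorem segList_length (a : A) (z : List A) (hz : 1 ≤ z.count a) :
    (segList a z).length = z.count a := by
  have h1 : z.count a = (z.dropWhile (· ≠ a)).count a := by
    conv_lhs => rw [← List.takeWhile_append_dropWhile (p := (· ≠ a)) (l := z)]
    rw [List.count_append, List.count_eq_zero.mpr (takeWhile_not_mem a z)]
    omega
  rw [h1, ← segList_flatten a z]
  exact (count_flatten_good a _ (segList_good a z hz)).symm

theorem numABlocks_add_one (a : A) (z : List A) (hz : 1 ≤ z.count a) :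
    numABlocks a z + 1 = z.count a := by
  rw [numABlocks]; omega

/-- The permuted segment list. -/
def permSegs (a : A) (z : List A) (σ : Equiv.Perm (Fin (numABlocks a z))) : List (List A) :=
  (List.ofFn fun k : Fin (numABlocks a z) => (segList a z).getD (σ k).val []) ++
    [(segList a z).getD (numABlocks a z) []]

theorem blockPermute_eq (a : A) (z : List A) (σ : Equiv.Perm (Fin (numABlocks a z))) :
    blockPermute a z σ = z.takeWhile (· ≠ a) ++ (permSegs a z σ).flatten := by
  rw [blockPermute, permSegs]
  simp [segList, List.append_assoc]

theorem permSegs_length (a : A) (z : List A) (σ : Equiv.Perm (Fin (numABlocks a z))) :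
    (permSegs a z σ).length = numABlocks a z + 1 := by
  simp [permSegs]

theorem permSegs_good (a : A) (z : List A) (hz : 1 ≤ z.count a)
    (σ : Equiv.Perm (Fin (numABlocks a z))) :
    ∀ s ∈ permSegs a z σ, GoodSeg a s := by
  have hlen : (segList a z).length = numABlocks a z + 1 := by
    rw [segList_length a z hz, numABlocks_add_one a z hz]
  intro s hs
  rw [permSegs, mem_append] at hs
  rcases hs with hs | hs
  · obtain ⟨k, hk⟩ := List.mem_ofFn.mp hs
    have hb : (σ k).val < (segList a z).length := by rw [hlen]; exact Nat.lt_succ_of_lt (σ k).2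
    rw [← hk]
    show GoodSeg a ((segList a z).getD (σ k).val [])
    rw [List.getD_eq_getElem _ _ hb]
    exact segList_good a z hz _ (List.getElem_mem hb)
  · rw [mem_singleton] at hs
    have hb : numABlocks a z < (segList a z).length := by rw [hlen]; omega
    rw [hs, List.getD_eq_getElem _ _ hb]
    exact segList_good a z hz _ (List.getElem_mem hb)

theorem permSegs_getD_lt (a : A) (z : List A) (σ : Equiv.Perm (Fin (numABlocks a z)))
    {j : ℕ} (hj : j < numABlocks a z) :
    (permSegs a z σ).getD j [] = (segList a z).getD (σ ⟨j, hj⟩).val [] := by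
  rw [permSegs, List.getD_append _ _ _ _ (by simpa using hj), List.getD_eq_getElem _ _ (by simpa using hj),
    List.getElem_ofFn]

theorem permSegs_getD_last (a : A) (z : List A) (σ : Equiv.Perm (Fin (numABlocks a z))) :
    (permSegs a z σ).getD (numABlocks a z) [] = (segList a z).getD (numABlocks a z) [] := by
  rw [permSegs, List.getD_append_right _ _ _ _ (by simp)]
  simp

theorem count_blockPermute (a : A) (z : List A) (hz : 1 ≤ z.count a)
    (σ : Equiv.Perm (Fin (numABlocks a z))) :
    (blockPermute a z σ).count a = z.count a := by
  rw [blockPermute_eq, List.count_append, List.count_eq_zero.mpr (takeWhile_not_mem a z),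
    count_flatten_good a _ (permSegs_good a z hz σ), permSegs_length,
    numABlocks_add_one a z hz]
  omega

theorem numABlocks_blockPermute (a : A) (z : List A) (hz : 1 ≤ z.count a)
    (σ : Equiv.Perm (Fin (numABlocks a z))) :
    numABlocks a (blockPermute a z σ) = numABlocks a z := by
  rw [numABlocks, numABlocks, count_blockPermute a z hz σ]

theorem flatten_good_cons (a : A) (L : List (List A)) (hne : L ≠ [])
    (hgood : ∀ s ∈ L, GoodSeg a s) : ∃ t, L.flatten = a :: t := by
  rcases L with _ | ⟨s, L'⟩
  · exact absurd rfl hne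
  · obtain ⟨t, rfl, _⟩ := hgood _ mem_cons_self
    exact ⟨t ++ L'.flatten, by simp⟩

theorem takeWhile_blockPermute (a : A) (z : List A) (hz : 1 ≤ z.count a)
    (σ : Equiv.Perm (Fin (numABlocks a z))) :
    (blockPermute a z σ).takeWhile (· ≠ a) = z.takeWhile (· ≠ a) := by
  obtain ⟨t, ht⟩ := flatten_good_cons a (permSegs a z σ) (by simp [permSegs]) (permSegs_good a z hz σ)
  rw [blockPermute_eq, ht, my_takeWhile_append a _ _ (takeWhile_not_mem a z)]
  simp [takeWhile_cons]

theorem dropWhile_blockPermute (a : A) (z : List A) (hz : 1 ≤ z.count a)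
    (σ : Equiv.Perm (Fin (numABlocks a z))) :
    (blockPermute a z σ).dropWhile (· ≠ a) = (permSegs a z σ).flatten := by
  obtain ⟨t, ht⟩ := flatten_good_cons a (permSegs a z σ) (by simp [permSegs]) (permSegs_good a z hz σ)
  rw [blockPermute_eq, my_dropWhile_append a _ _ (takeWhile_not_mem a z), ht]
  simp [dropWhile_cons]

theorem segList_blockPermute (a : A) (z : List A) (hz : 1 ≤ z.count a)
    (σ : Equiv.Perm (Fin (numABlocks a z))) :
    segList a (blockPermute a z σ) = permSegs a z σ := by
  rw [segList, dropWhile_blockPermute a z hz σ,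
    aSegments_flatten_good a _ (permSegs_good a z hz σ)]

theorem permSegs_one (a : A) (z : List A) (hz : 1 ≤ z.count a) :
    permSegs a z 1 = segList a z := by
  have hlen : (segList a z).length = numABlocks a z + 1 := by
    rw [segList_length a z hz, numABlocks_add_one a z hz]
  apply List.ext_getElem
  · simp [permSegs, hlen]
  · intro i h1 h2
    have hi2 : i < numABlocks a z + 1 := by rwa [permSegs_length] at h1
    rw [← List.getD_eq_getElem (permSegs a z 1) [] h1, ← List.getD_eq_getElem (segList a z) [] h2]
    rcases Nat.lt_or_ge i (numABlocks a z) with hi | hi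
    · rw [permSegs_getD_lt a z 1 hi]
      rfl
    · have : i = numABlocks a z := by omega
      subst this
      exact permSegs_getD_last a z 1

theorem blockPermute_one (a : A) (z : List A) (hz : 1 ≤ z.count a) :
    blockPermute a z 1 = z := by
  rw [blockPermute_eq, permSegs_one a z hz, segList_flatten a z,
    List.takeWhile_append_dropWhile]

theorem length_blockPermute (a : A) (z : List A) (hz : 1 ≤ z.count a)
    (σ : Equiv.Perm (Fin (numABlocks a z))) :
    (blockPermute a z σ).length = z.length := by
  have key : ∀ σ : Equiv.Perm (Fin (numABlocks a z)), (blockPermute a z σ).length =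
      (z.takeWhile (· ≠ a)).length + ((∑ k : Fin (numABlocks a z),
        ((segList a z).getD (σ k).val []).length) +
        ((segList a z).getD (numABlocks a z) []).length) := by
    intro σ
    rw [blockPermute]
    simp [segList, List.length_append, List.length_flatten, List.map_ofFn, List.sum_ofFn,
      Function.comp, Nat.add_assoc]
  have k1 := key 1
  simp only [Equiv.Perm.coe_one, id_eq] at k1
  rw [blockPermute_one a z hz] at k1
  rw [key σ, Equiv.sum_comp σ (fun k : Fin (numABlocks a z) => ((segList a z).getD k.val []).length),
    ← k1]

theorem pc_pc {d d' : ℕ} (h : d = d') (h' : d' = d) (σ : Equiv.Perm (Fin d)) :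
    pc h' (pc h σ) = σ := by subst h; simp

theorem pc_mul {d d' : ℕ} (h : d = d') (σ τ : Equiv.Perm (Fin d)) :
    pc h (σ * τ) = pc h σ * pc h τ := by subst h; simp

theorem pc_inv {d d' : ℕ} (h : d = d') (σ : Equiv.Perm (Fin d)) :
    pc h σ⁻¹ = (pc h σ)⁻¹ := by subst h; simp

theorem pc_injective {d d' : ℕ} (h : d = d') : Function.Injective (pc (d := d) h) := by
  subst h; intro x y hxy; simpa using hxy

theorem pc_mem {Perms : (d : ℕ) → Subgroup (Equiv.Perm (Fin d))} {d d' : ℕ} (h : d = d')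
    {σ : Equiv.Perm (Fin d)} (hσ : σ ∈ Perms d) : pc h σ ∈ Perms d' := by
  subst h; simpa using hσ

theorem sum_pc {M : Type*} [AddCommMonoid M] (Perms : (d : ℕ) → Subgroup (Equiv.Perm (Fin d)))
    [∀ d, DecidablePred (· ∈ Perms d)] {d d' : ℕ} (h : d = d')
    (f : Equiv.Perm (Fin d') → M) :
    ∑ τ : Perms d', f ↑τ = ∑ τ : Perms d, f (pc h ↑τ) := by
  subst h; simp

theorem card_perms_congr (Perms : (d : ℕ) → Subgroup (Equiv.Perm (Fin d)))
    [∀ d, DecidablePred (· ∈ Perms d)] {d d' : ℕ} (h : d = d') :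
    Fintype.card (Perms d') = Fintype.card (Perms d) := by
  subst h; rfl

theorem blockPermute_comp (a : A) (z : List A) (hz : 1 ≤ z.count a)
    (σ : Equiv.Perm (Fin (numABlocks a z)))
    (τ : Equiv.Perm (Fin (numABlocks a (blockPermute a z σ)))) :
    blockPermute a (blockPermute a z σ) τ =
      blockPermute a z (σ * pc (numABlocks_blockPermute a z hz σ) τ) := by
  have h := numABlocks_blockPermute a z hz σ
  have hsegs : segList a (blockPermute a z σ) = permSegs a z σ := segList_blockPermute a z hz σ
  have e1 : (segList a (blockPermute a z σ)).getD (numABlocks a (blockPermute a z σ)) [] =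
      (segList a z).getD (numABlocks a z) [] := by
    rw [hsegs, h]; exact permSegs_getD_last a z σ
  have e2 : (List.ofFn fun k : Fin (numABlocks a (blockPermute a z σ)) =>
        (segList a (blockPermute a z σ)).getD (τ k).val [])
      = List.ofFn fun i : Fin (numABlocks a z) =>
          (segList a z).getD ((σ * pc h τ) i).val [] := by
    rw [List.ofFn_congr h]
    congr 1
    funext i
    rw [hsegs]
    have hb : ((τ (Fin.cast h.symm i)).val) < numABlocks a z :=
      (τ (Fin.cast h.symm i)).isLt.trans_eq h
    rw [permSegs_getD_lt a z σ hb]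
    have heq : (⟨(τ (Fin.cast h.symm i)).val, hb⟩ : Fin (numABlocks a z)) = pc h τ i := by
      ext
      simp [pc, Equiv.permCongr_apply, finCongr_apply]
    rw [Equiv.Perm.mul_apply, ← heq]
  have hping : permSegs a (blockPermute a z σ) τ = permSegs a z (σ * pc h τ) := by
    simp only [permSegs]
    rw [e2, e1]
  calc blockPermute a (blockPermute a z σ) τ
      = (blockPermute a z σ).takeWhile (· ≠ a) ++ (permSegs a (blockPermute a z σ) τ).flatten :=
        blockPermute_eq a (blockPermute a z σ) τ
    _ = z.takeWhile (· ≠ a) ++ (permSegs a z (σ * pc h τ)).flatten := by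
        rw [takeWhile_blockPermute a z hz σ, hping]
    _ = blockPermute a z (σ * pc h τ) := (blockPermute_eq a z (σ * pc h τ)).symm

section Stat

open scoped Classical

variable (Perms : (d : ℕ) → Subgroup (Equiv.Perm (Fin d))) [∀ d, DecidablePred (· ∈ Perms d)]
variable (S : List A → ℝ) (a : A)

def pcS {d d' : ℕ} (h : d = d') (π : Perms d) : Perms d' := ⟨pc h (π : Equiv.Perm (Fin d)), pc_mem h π.2⟩

theorem coe_pcS {d d' : ℕ} (h : d = d') (π : Perms d) :
    (pcS Perms h π : Equiv.Perm (Fin d')) = pc h (π : Equiv.Perm (Fin d)) := rfl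

theorem pcS_rfl {d : ℕ} (π : Perms d) : pcS Perms rfl π = π := Subtype.ext (pc_rfl _)

theorem pcS_inv {d d' : ℕ} (h : d = d') (π : Perms d) :
    pcS Perms h π⁻¹ = (pcS Perms h π)⁻¹ := by subst h; rw [pcS_rfl, pcS_rfl]

theorem pcS_trans {d d' d'' : ℕ} (h : d = d') (h' : d' = d'') (π : Perms d) :
    pcS Perms h' (pcS Perms h π) = pcS Perms (h.trans h') π := by
  subst h; subst h'; rw [pcS_rfl, pcS_rfl]

theorem pcS_heq {d d' : ℕ} (h : d = d') (π : Perms d) : HEq (pcS Perms h π) π := by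
  subst h; rw [pcS_rfl]

noncomputable def qs (z : List A) : ℝ :=
  (∑ π : Perms (numABlocks a z),
      if S z ≤ S (blockPermute a z (π : Equiv.Perm (Fin (numABlocks a z)))) then (1 : ℝ) else 0) /
    (Fintype.card (Perms (numABlocks a z)) : ℝ)

def Dz (z : List A) : Prop :=
  ∀ π π' : Perms (numABlocks a z),
    S (blockPermute a z (π : Equiv.Perm (Fin (numABlocks a z)))) =
        S (blockPermute a z (π' : Equiv.Perm (Fin (numABlocks a z)))) → π = π'

noncomputable def rnk (z : List A) (π : Perms (numABlocks a z)) : ℕ :=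
  (Finset.univ.filter fun τ : Perms (numABlocks a z) =>
    S (blockPermute a z (π : Equiv.Perm (Fin (numABlocks a z)))) ≤
      S (blockPermute a z (τ : Equiv.Perm (Fin (numABlocks a z))))).card

set_option maxHeartbeats 1000000 in
theorem qs_blockPermute (z : List A) (hz : 1 ≤ z.count a) (π : Perms (numABlocks a z)) :
    qs Perms S a (blockPermute a z (π : Equiv.Perm (Fin (numABlocks a z)))) =
      (rnk Perms S a z π : ℝ) / (Fintype.card (Perms (numABlocks a z)) : ℝ) := by
  have h : numABlocks a (blockPermute a z (π : Equiv.Perm (Fin (numABlocks a z)))) =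
      numABlocks a z := numABlocks_blockPermute a z hz _
  rw [qs, card_perms_congr Perms h,
    sum_pc Perms h.symm (fun g => if S (blockPermute a z (π : Equiv.Perm (Fin (numABlocks a z)))) ≤
      S (blockPermute a (blockPermute a z (π : Equiv.Perm (Fin (numABlocks a z)))) g)
      then (1 : ℝ) else 0)]
  have hcomp : ∀ τ : Perms (numABlocks a z),
      blockPermute a (blockPermute a z (π : Equiv.Perm (Fin (numABlocks a z))))
          (pc h.symm (τ : Equiv.Perm (Fin (numABlocks a z)))) =
        blockPermute a z ((π * τ : Perms (numABlocks a z)) : Equiv.Perm (Fin (numABlocks a z))) := by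
    intro τ
    rw [blockPermute_comp a z hz _ (pc h.symm (τ : Equiv.Perm (Fin (numABlocks a z)))),
      pc_pc h.symm h]
    rfl
  simp only [hcomp]
  rw [show (∑ τ : Perms (numABlocks a z),
      if S (blockPermute a z (π : Equiv.Perm (Fin (numABlocks a z)))) ≤
        S (blockPermute a z ((π * τ : Perms (numABlocks a z)) : Equiv.Perm (Fin (numABlocks a z))))
      then (1 : ℝ) else 0) = ∑ τ : Perms (numABlocks a z),
      if S (blockPermute a z (π : Equiv.Perm (Fin (numABlocks a z)))) ≤
        S (blockPermute a z (τ : Equiv.Perm (Fin (numABlocks a z))))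
      then (1 : ℝ) else 0 from Equiv.sum_comp (Equiv.mulLeft π)
        (fun τ : Perms (numABlocks a z) =>
          if S (blockPermute a z (π : Equiv.Perm (Fin (numABlocks a z)))) ≤
            S (blockPermute a z (τ : Equiv.Perm (Fin (numABlocks a z)))) then (1 : ℝ) else 0)]
  rw [rnk, Finset.sum_boole]

theorem rnk_lt_of_lt (z : List A) (π π' : Perms (numABlocks a z))
    (hlt : S (blockPermute a z (π : Equiv.Perm (Fin (numABlocks a z)))) <
      S (blockPermute a z (π' : Equiv.Perm (Fin (numABlocks a z))))) :
    rnk Perms S a z π' < rnk Perms S a z π := by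
  apply Finset.card_lt_card
  constructor
  · intro τ hτ
    rw [Finset.mem_filter] at hτ ⊢
    exact ⟨hτ.1, le_of_lt (lt_of_lt_of_le hlt hτ.2)⟩
  · intro hsub
    have h1 : π ∈ (Finset.univ.filter fun τ : Perms (numABlocks a z) =>
        S (blockPermute a z (π : Equiv.Perm (Fin (numABlocks a z)))) ≤
          S (blockPermute a z (τ : Equiv.Perm (Fin (numABlocks a z))))) := by
      rw [Finset.mem_filter]; exact ⟨Finset.mem_univ _, le_refl _⟩
    have h2 := hsub h1
    rw [Finset.mem_filter] at h2
    exact absurd h2.2 (not_le.mpr hlt)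

theorem rnk_inj (z : List A) (hD : Dz Perms S a z) :
    Function.Injective (rnk Perms S a z) := by
  intro π π' hr
  by_contra hne
  have hSne : S (blockPermute a z (π : Equiv.Perm (Fin (numABlocks a z)))) ≠
      S (blockPermute a z (π' : Equiv.Perm (Fin (numABlocks a z)))) :=
    fun hS => hne (hD π π' hS)
  rcases lt_or_gt_of_ne hSne with hlt | hlt
  · have := rnk_lt_of_lt Perms S a z π π' hlt; omega
  · have := rnk_lt_of_lt Perms S a z π' π hlt; omega

theorem rnk_pos (z : List A) (π : Perms (numABlocks a z)) : 1 ≤ rnk Perms S a z π := by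
  rw [rnk, Nat.one_le_iff_ne_zero, ← Nat.pos_iff_ne_zero, Finset.card_pos]
  exact ⟨π, by rw [Finset.mem_filter]; exact ⟨Finset.mem_univ _, le_refl _⟩⟩

theorem rnk_le (z : List A) (π : Perms (numABlocks a z)) :
    rnk Perms S a z π ≤ Fintype.card (Perms (numABlocks a z)) := by
  rw [rnk, ← Finset.card_univ]
  exact Finset.card_filter_le _ _

theorem card_rnk_le (z : List A) (hD : Dz Perms S a z) (K : ℕ)
    (hK : K ≤ Fintype.card (Perms (numABlocks a z))) :
    (Finset.univ.filter fun π : Perms (numABlocks a z) => rnk Perms S a z π ≤ K).card = K := by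
  classical
  set n := Fintype.card (Perms (numABlocks a z)) with hn
  have himg : Finset.image (rnk Perms S a z) Finset.univ = Finset.Icc 1 n := by
    apply Finset.eq_of_subset_of_card_le
    · intro k hk
      rw [Finset.mem_image] at hk
      obtain ⟨π, _, rfl⟩ := hk
      rw [Finset.mem_Icc]
      exact ⟨rnk_pos Perms S a z π, rnk_le Perms S a z π⟩
    · rw [Finset.card_image_of_injective _ (rnk_inj Perms S a z hD), Finset.card_univ,
        Nat.card_Icc]
      omega
  have hcard : (Finset.univ.filter fun π : Perms (numABlocks a z) => rnk Perms S a z π ≤ K).card =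
      ((Finset.image (rnk Perms S a z) Finset.univ).filter (fun k => k ≤ K)).card := by
    rw [Finset.filter_image, Finset.card_image_of_injective _ (rnk_inj Perms S a z hD)]
  rw [hcard, himg]
  have : (Finset.Icc 1 n).filter (fun k => k ≤ K) = Finset.Icc 1 K := by
    ext k
    simp only [Finset.mem_filter, Finset.mem_Icc]
    omega
  rw [this, Nat.card_Icc]
  omega

set_option maxHeartbeats 1000000 in
theorem Dz_blockPermute (z : List A) (hz : 1 ≤ z.count a) (hD : Dz Perms S a z)
    (π : Perms (numABlocks a z)) :
    Dz Perms S a (blockPermute a z (π : Equiv.Perm (Fin (numABlocks a z)))) := by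
  intro τ τ' hS
  have e1 := blockPermute_comp a z hz (π : Equiv.Perm (Fin (numABlocks a z))) τ.1
  have e2 := blockPermute_comp a z hz (π : Equiv.Perm (Fin (numABlocks a z))) τ'.1
  rw [e1, e2] at hS
  have hm1 : pc (numABlocks_blockPermute a z hz (π : Equiv.Perm (Fin (numABlocks a z)))) τ.1 ∈
      Perms (numABlocks a z) := pc_mem _ τ.2
  have hm2 : pc (numABlocks_blockPermute a z hz (π : Equiv.Perm (Fin (numABlocks a z)))) τ'.1 ∈
      Perms (numABlocks a z) := pc_mem _ τ'.2
  set g1 : Perms (numABlocks a z) := ⟨_, hm1⟩ with hg1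
  set g2 : Perms (numABlocks a z) := ⟨_, hm2⟩ with hg2
  have c1 : (π : Equiv.Perm (Fin (numABlocks a z))) *
      pc (numABlocks_blockPermute a z hz (π : Equiv.Perm (Fin (numABlocks a z)))) τ.1 =
      ((π * g1 : Perms (numABlocks a z)) : Equiv.Perm (Fin (numABlocks a z))) := rfl
  have c2 : (π : Equiv.Perm (Fin (numABlocks a z))) *
      pc (numABlocks_blockPermute a z hz (π : Equiv.Perm (Fin (numABlocks a z)))) τ'.1 =
      ((π * g2 : Perms (numABlocks a z)) : Equiv.Perm (Fin (numABlocks a z))) := rfl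
  rw [c1, c2] at hS
  have key := hD (π * g1) (π * g2) hS
  have h2 : g1 = g2 := mul_left_cancel key
  have h3 := congrArg Subtype.val h2
  exact Subtype.ext (pc_injective _ h3)


theorem count_qs_le (z : List A) (hz : 2 ≤ z.count a) (hD : Dz Perms S a z)
    (α : ℝ) (hα : α ∈ Set.Ioo (0 : ℝ) 1) :
    (Finset.univ.filter fun π : Perms (numABlocks a z) =>
        qs Perms S a (blockPermute a z (π : Equiv.Perm (Fin (numABlocks a z)))) ≤ α).card =
      ⌊α * (Fintype.card (Perms (numABlocks a z)) : ℝ)⌋₊ := by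
  have hz1 : 1 ≤ z.count a := by omega
  set n := Fintype.card (Perms (numABlocks a z)) with hn
  have hnpos : 0 < n := Fintype.card_pos
  have hnR : (0 : ℝ) < (n : ℝ) := by exact_mod_cast hnpos
  set K := ⌊α * (n : ℝ)⌋₊ with hK
  have hKn : K ≤ n := by
    have : α * (n : ℝ) < (n : ℝ) := by
      nlinarith [hα.1, hα.2]
    have := Nat.floor_lt (le_of_lt (mul_pos hα.1 hnR)) |>.mpr this
    omega
  have hiff : ∀ π : Perms (numABlocks a z),
      (qs Perms S a (blockPermute a z (π : Equiv.Perm (Fin (numABlocks a z)))) ≤ α ↔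
        rnk Perms S a z π ≤ K) := by
    intro π
    rw [qs_blockPermute Perms S a z hz1 π, div_le_iff₀ hnR, hK,
      Nat.le_floor_iff (le_of_lt (mul_pos hα.1 hnR))]
  rw [Finset.filter_congr (fun π _ => by rw [hiff π])]
  exact card_rnk_le Perms S a z hD K hKn

set_option maxHeartbeats 1000000 in
theorem blockPermute_inv_cancel (z : List A) (hz : 1 ≤ z.count a) (π : Perms (numABlocks a z)) :
    blockPermute a (blockPermute a z (π : Equiv.Perm (Fin (numABlocks a z))))
      ((pcS Perms (numABlocks_blockPermute a z hz
          (π : Equiv.Perm (Fin (numABlocks a z)))).symm π⁻¹ :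
        Perms (numABlocks a (blockPermute a z (π : Equiv.Perm (Fin (numABlocks a z)))))) :
        Equiv.Perm (Fin (numABlocks a (blockPermute a z
          (π : Equiv.Perm (Fin (numABlocks a z))))))) = z := by
  rw [coe_pcS]
  rw [blockPermute_comp a z hz (π : Equiv.Perm (Fin (numABlocks a z)))
    (pc (numABlocks_blockPermute a z hz (π : Equiv.Perm (Fin (numABlocks a z)))).symm
      ((π⁻¹ : Perms (numABlocks a z)) : Equiv.Perm (Fin (numABlocks a z))))]
  rw [pc_pc]
  have hone : (π : Equiv.Perm (Fin (numABlocks a z))) *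
      ((π⁻¹ : Perms (numABlocks a z)) : Equiv.Perm (Fin (numABlocks a z))) = 1 := by
    rw [← Subgroup.coe_mul, mul_inv_cancel, Subgroup.coe_one]
  rw [hone, blockPermute_one a z hz]

end Stat

section Prob

open scoped ENNReal

variable [Fintype A]
variable {Ω : Type*} [MeasurableSpace Ω]

set_option maxHeartbeats 4000000 in
theorem key_prob (P : Measure Ω) [IsProbabilityMeasure P]
    (Perms : (d : ℕ) → Subgroup (Equiv.Perm (Fin d))) [∀ d, DecidablePred (· ∈ Perms d)]
    (S : List A → ℝ) (a : A) (N : ℕ) (Z : Ω → List A)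
    (hZmeas : ∀ z : List A, MeasurableSet {ω | Z ω = z})
    (hinv : ∀ z : List A, z.length = N → 2 ≤ z.count a →
      ∀ σ : Equiv.Perm (Fin (numABlocks a z)),
        P {ω | Z ω = z} = P {ω | Z ω = blockPermute a z σ})
    (α : ℝ) (hα : α ∈ Set.Ioo (0 : ℝ) 1)
    (G : Set (List A))
    (hGsub : ∀ z ∈ G, z.length = N ∧ 2 ≤ z.count a ∧ Dz Perms S a z)
    (hGae : ∀ᵐ ω ∂P, Z ω ∈ G)
    (hGinv : ∀ z ∈ G, ∀ π : Perms (numABlocks a z),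
      blockPermute a z (π : Equiv.Perm (Fin (numABlocks a z))) ∈ G) :
    P {ω | qs Perms S a (Z ω) ≤ α} =
      ∑' (z : G), (⌊α * (Fintype.card (Perms (numABlocks a (z : List A))) : ℝ)⌋₊ : ℝ≥0∞)
        * (Fintype.card (Perms (numABlocks a (z : List A))) : ℝ≥0∞)⁻¹
        * P {ω | Z ω = (z : List A)} := by
  classical
  set q : List A → ℝ := qs Perms S a with hq
  set X : Set Ω := {ω | q (Z ω) ≤ α} with hX
  have hXmeas : MeasurableSet X := by
    have hXu : X = ⋃ z ∈ {z : List A | q z ≤ α}, {ω | Z ω = z} := by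
      ext ω
      simp only [hX, Set.mem_setOf_eq, Set.mem_iUnion, exists_prop]
      exact ⟨fun h => ⟨Z ω, h, rfl⟩, fun ⟨z, hz, hzw⟩ => by rw [hzw]; exact hz⟩
    rw [hXu]
    exact MeasurableSet.biUnion (Set.to_countable _) (fun z _ => hZmeas z)
  have hGc : G.Countable := Set.to_countable G
  have hcompl : P {ω | Z ω ∈ G}ᶜ = 0 := by
    have := (MeasureTheory.ae_iff).mp hGae
    simpa [Set.compl_setOf] using this
  have hPXG : P X = P (X ∩ {ω | Z ω ∈ G}) := (measure_inter_conull hcompl).symm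
  have hXG : X ∩ {ω | Z ω ∈ G} = ⋃ z ∈ G, ({ω | Z ω = z} ∩ X) := by
    ext ω
    simp only [Set.mem_inter_iff, Set.mem_setOf_eq, Set.mem_iUnion, exists_prop]
    constructor
    · rintro ⟨hx, hg⟩; exact ⟨Z ω, hg, rfl, hx⟩
    · rintro ⟨z, hzG, hzw, hx⟩; exact ⟨hx, by rw [hzw]; exact hzG⟩
  have hdisj : G.PairwiseDisjoint (fun z => {ω | Z ω = z} ∩ X) := by
    intro z hz z' hz' hne
    refine Set.disjoint_left.mpr ?_
    rintro ω ⟨h1, _⟩ ⟨h2, _⟩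
    exact hne (h1.symm.trans h2)
  have hPsum : P X = ∑' (z : G), P ({ω | Z ω = (z : List A)} ∩ X) := by
    rw [hPXG, hXG, measure_biUnion hGc hdisj (fun z _ => (hZmeas z).inter hXmeas)]
  have hval : ∀ z : List A, z ∈ G → P ({ω | Z ω = z} ∩ X) =
      (if q z ≤ α then (1 : ℝ≥0∞) else 0) * P {ω | Z ω = z} := by
    intro z hz
    by_cases hqz : q z ≤ α
    · rw [if_pos hqz, one_mul]
      congr 1
      apply Set.inter_eq_left.mpr
      intro ω hω
      simp only [Set.mem_setOf_eq] at hω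
      simp only [hX, Set.mem_setOf_eq, hω]
      exact hqz
    · rw [if_neg hqz, zero_mul]
      convert measure_empty (μ := P)
      ext ω
      simp only [Set.mem_inter_iff, Set.mem_setOf_eq, Set.mem_empty_iff_false, iff_false,
        not_and, hX]
      intro hω
      rw [hω]
      exact hqz
  have hcnt1 : ∀ z : List A, z ∈ G → 1 ≤ z.count a := by
    intro z hz
    have := (hGsub z hz).2.1
    omega
  have hexp : ∀ z : List A, z ∈ G →
      (if q z ≤ α then (1 : ℝ≥0∞) else 0) * P {ω | Z ω = z} =
      ∑ π : Perms (numABlocks a z), (Fintype.card (Perms (numABlocks a z)) : ℝ≥0∞)⁻¹ *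
        ((if q z ≤ α then (1 : ℝ≥0∞) else 0) *
          P {ω | Z ω = blockPermute a z (π : Equiv.Perm (Fin (numABlocks a z)))}) := by
    intro z hz
    obtain ⟨hlen, hcnt, _⟩ := hGsub z hz
    have h1 : ∀ π : Perms (numABlocks a z),
        P {ω | Z ω = blockPermute a z (π : Equiv.Perm (Fin (numABlocks a z)))} =
          P {ω | Z ω = z} := fun π => (hinv z hlen hcnt _).symm
    simp only [h1]
    rw [Finset.sum_const, Finset.card_univ, nsmul_eq_mul, ← mul_assoc,
      ENNReal.mul_inv_cancel (by exact_mod_cast (Fintype.card_ne_zero) :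
        (Fintype.card (Perms (numABlocks a z)) : ℝ≥0∞) ≠ 0) (ENNReal.natCast_ne_top _), one_mul]
  set F : (Σ z : G, ↥(Perms (numABlocks a (z : List A)))) → ℝ≥0∞ := fun p =>
    (Fintype.card (Perms (numABlocks a (p.1 : List A))) : ℝ≥0∞)⁻¹ *
      ((if q (p.1 : List A) ≤ α then (1 : ℝ≥0∞) else 0) *
        P {ω | Z ω = blockPermute a (p.1 : List A)
          ((p.2 : Equiv.Perm (Fin (numABlocks a (p.1 : List A)))))}) with hF
  have hPX2 : P X = ∑' p : (Σ z : G, ↥(Perms (numABlocks a (z : List A)))), F p := by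
    rw [hPsum, ENNReal.tsum_sigma' F]
    refine tsum_congr fun z => ?_
    rw [hval z z.2, hexp z z.2, tsum_fintype]
  set Ψ : (Σ z : G, ↥(Perms (numABlocks a (z : List A)))) →
      (Σ z : G, ↥(Perms (numABlocks a (z : List A)))) := fun p =>
    ⟨⟨blockPermute a (p.1 : List A) (p.2 : Equiv.Perm (Fin (numABlocks a (p.1 : List A)))),
        hGinv _ p.1.2 p.2⟩,
      pcS Perms (numABlocks_blockPermute a (p.1 : List A) (hcnt1 _ p.1.2)
        (p.2 : Equiv.Perm (Fin (numABlocks a (p.1 : List A))))).symm p.2⁻¹⟩ with hΨ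
  have hΨinvol : Function.Involutive Ψ := by
    rintro ⟨⟨z, hzG⟩, π⟩
    have hz1 := hcnt1 z hzG
    have hfst := blockPermute_inv_cancel Perms a z hz1 π
    refine Sigma.ext (Subtype.ext ?_) ?_
    · exact hfst
    · show HEq _ π
      simp only [hΨ, Ψ]
      rw [← pcS_inv, inv_inv, pcS_trans]
      exact pcS_heq Perms _ π
  have hFΨ : ∀ p : (Σ z : G, ↥(Perms (numABlocks a (z : List A)))), F (Ψ p) =
      (Fintype.card (Perms (numABlocks a (p.1 : List A))) : ℝ≥0∞)⁻¹ *
        ((if q (blockPermute a (p.1 : List A)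
            ((p.2 : Equiv.Perm (Fin (numABlocks a (p.1 : List A)))))) ≤ α
          then (1 : ℝ≥0∞) else 0) * P {ω | Z ω = (p.1 : List A)}) := by
    rintro ⟨⟨z, hzG⟩, π⟩
    have hz1 := hcnt1 z hzG
    have hfst := blockPermute_inv_cancel Perms a z hz1 π
    simp only [hΨ, hF]
    rw [card_perms_congr Perms (numABlocks_blockPermute a z hz1
      (π : Equiv.Perm (Fin (numABlocks a z))))]
    congr 2
    rw [hfst]
  have hswap : (∑' p : (Σ z : G, ↥(Perms (numABlocks a (z : List A)))), F p) =
      ∑' p : (Σ z : G, ↥(Perms (numABlocks a (z : List A)))), F (Ψ p) :=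
    (Equiv.tsum_eq (Function.Involutive.toPerm Ψ hΨinvol) F).symm
  have hinner : ∀ z : List A, z ∈ G →
      (∑ π : Perms (numABlocks a z), (if q (blockPermute a z
          (π : Equiv.Perm (Fin (numABlocks a z)))) ≤ α then (1 : ℝ≥0∞) else 0)) =
      (⌊α * (Fintype.card (Perms (numABlocks a z)) : ℝ)⌋₊ : ℝ≥0∞) := by
    intro z hz
    obtain ⟨hlen, hcnt, hDz⟩ := hGsub z hz
    rw [Finset.sum_boole]
    rw [hq]
    exact_mod_cast congrArg (Nat.cast (R := ℝ≥0∞)) (count_qs_le Perms S a z hcnt hDz α hα)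
  rw [hPX2, hswap, ENNReal.tsum_sigma' (fun p => F (Ψ p))]
  refine tsum_congr fun z => ?_
  rw [tsum_fintype]
  calc (∑ π : Perms (numABlocks a (z : List A)), F (Ψ ⟨z, π⟩))
      = ∑ π : Perms (numABlocks a (z : List A)),
          (Fintype.card (Perms (numABlocks a (z : List A))) : ℝ≥0∞)⁻¹ *
          ((if q (blockPermute a (z : List A)
              ((π : Equiv.Perm (Fin (numABlocks a (z : List A)))))) ≤ α
            then (1 : ℝ≥0∞) else 0) * P {ω | Z ω = (z : List A)}) :=
        Finset.sum_congr rfl fun π _ => hFΨ ⟨z, π⟩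
    _ = (Fintype.card (Perms (numABlocks a (z : List A))) : ℝ≥0∞)⁻¹ *
          ((∑ π : Perms (numABlocks a (z : List A)),
            (if q (blockPermute a (z : List A)
              ((π : Equiv.Perm (Fin (numABlocks a (z : List A)))))) ≤ α
            then (1 : ℝ≥0∞) else 0)) * P {ω | Z ω = (z : List A)}) := by
        rw [← Finset.mul_sum, Finset.sum_mul]
    _ = (⌊α * (Fintype.card (Perms (numABlocks a (z : List A))) : ℝ)⌋₊ : ℝ≥0∞)
        * (Fintype.card (Perms (numABlocks a (z : List A))) : ℝ≥0∞)⁻¹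
        * P {ω | Z ω = (z : List A)} := by
        rw [hinner (z : List A) z.2]
        ring

theorem tsum_G_one (P : Measure Ω) [IsProbabilityMeasure P] (Z : Ω → List A)
    (hZmeas : ∀ z : List A, MeasurableSet {ω | Z ω = z})
    (G : Set (List A)) (hGae : ∀ᵐ ω ∂P, Z ω ∈ G) :
    ∑' (z : G), P {ω | Z ω = (z : List A)} = 1 := by
  classical
  have hGc : G.Countable := Set.to_countable G
  have hdisj : G.PairwiseDisjoint (fun z => {ω | Z ω = z}) := by
    intro z hz z' hz' hne
    refine Set.disjoint_left.mpr ?_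
    rintro ω h1 h2
    exact hne ((h1 : Z ω = z).symm.trans h2)
  have hUn : (⋃ z ∈ G, {ω | Z ω = z}) = {ω | Z ω ∈ G} := by
    ext ω
    simp only [Set.mem_iUnion, Set.mem_setOf_eq, exists_prop]
    exact ⟨fun ⟨z, hz, hzw⟩ => by rw [hzw]; exact hz, fun h => ⟨Z ω, h, rfl⟩⟩
  have hmeas : MeasurableSet {ω | Z ω ∈ G} := by
    rw [← hUn]
    exact MeasurableSet.biUnion hGc (fun z _ => hZmeas z)
  have hcompl : P {ω | Z ω ∈ G}ᶜ = 0 := by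
    have := (MeasureTheory.ae_iff).mp hGae
    simpa [Set.compl_setOf] using this
  have h1 : P {ω | Z ω ∈ G} = 1 := (prob_compl_eq_zero_iff hmeas).mp hcompl
  rw [← measure_biUnion hGc hdisj (fun z _ => hZmeas z), hUn, h1]

end Prob

end BWAux

open scoped ENNReal

open BWAux in
set_option maxHeartbeats 4000000 in
/-- **Validity of block-wise randomization for Markovian data.** -/
theorem blockwise_conformal_valid
    {Ω : Type*} [MeasurableSpace Ω] (P : Measure Ω) [IsProbabilityMeasure P]
    {A : Type*} [DecidableEq A] [Fintype A]
    (a : A) (N : ℕ) (hN : 1 ≤ N)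
    (Z : Ω → List A)
    (hZmeas : ∀ z : List A, MeasurableSet {ω | Z ω = z})
    (hlen : ∀ᵐ ω ∂P, (Z ω).length = N)
    (hocc : ∀ᵐ ω ∂P, 2 ≤ (Z ω).count a)
    (hinv : ∀ z : List A, z.length = N → 2 ≤ z.count a →
      ∀ σ : Equiv.Perm (Fin (numABlocks a z)),
        P {ω | Z ω = z} = P {ω | Z ω = blockPermute a z σ})
    (Perms : (d : ℕ) → Subgroup (Equiv.Perm (Fin d)))
    [∀ d, DecidablePred (· ∈ Perms d)]
    (S : List A → ℝ)
    (hdist : ∀ᵐ ω ∂P, ∀ π π' : Perms (numABlocks a (Z ω)),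
      S (blockPermute a (Z ω) (π : Equiv.Perm (Fin (numABlocks a (Z ω))))) =
          S (blockPermute a (Z ω) (π' : Equiv.Perm (Fin (numABlocks a (Z ω))))) → π = π')
    (α : ℝ) (hα : α ∈ Set.Ioo (0 : ℝ) 1) :
    1 - α ≤ (P {ω | α <
        (∑ π : Perms (numABlocks a (Z ω)),
            if S (Z ω) ≤ S (blockPermute a (Z ω)
                (π : Equiv.Perm (Fin (numABlocks a (Z ω))))) then (1 : ℝ) else 0) /
          (Fintype.card (Perms (numABlocks a (Z ω))) : ℝ)}).toReal ∧
      ∀ m : ℕ, 1 ≤ m →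
        (∀ᵐ ω ∂P, m ≤ Fintype.card (Perms (numABlocks a (Z ω)))) →
        (P {ω | α <
            (∑ π : Perms (numABlocks a (Z ω)),
                if S (Z ω) ≤ S (blockPermute a (Z ω)
                    (π : Equiv.Perm (Fin (numABlocks a (Z ω))))) then (1 : ℝ) else 0) /
              (Fintype.card (Perms (numABlocks a (Z ω))) : ℝ)}).toReal ≤ 1 - α + 1 / (m : ℝ) := by
  classical
  obtain ⟨hα0, hα1⟩ := hα
  set q : List A → ℝ := qs Perms S a with hqdef
  set X : Set Ω := {ω | q (Z ω) ≤ α} with hXdef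
  set Y : Set Ω := {ω | α < q (Z ω)} with hYdef
  have hYX : Y = Xᶜ := by
    ext ω
    simp only [hYdef, hXdef, Set.mem_setOf_eq, Set.mem_compl_iff, not_le]
  have hXmeas : MeasurableSet X := by
    have hXu : X = ⋃ z ∈ {z : List A | q z ≤ α}, {ω | Z ω = z} := by
      ext ω
      simp only [hXdef, Set.mem_setOf_eq, Set.mem_iUnion, exists_prop]
      exact ⟨fun h => ⟨Z ω, h, rfl⟩, fun ⟨z, hz, hzw⟩ => by rw [hzw]; exact hz⟩
    rw [hXu]
    exact MeasurableSet.biUnion (Set.to_countable _) (fun z _ => hZmeas z)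
  have hPXc : P Y = 1 - P X := by rw [hYX]; exact prob_compl_eq_one_sub hXmeas
  have hPXle1 : P X ≤ 1 := prob_le_one
  have hPXne : P X ≠ ⊤ := lt_of_le_of_lt hPXle1 ENNReal.one_lt_top |>.ne
  have hPY1 : (P Y).toReal = 1 - (P X).toReal := by
    rw [hPXc, ENNReal.toReal_sub_of_le hPXle1 ENNReal.one_ne_top, ENNReal.toReal_one]
  -- the good set for part 1
  set G1 : Set (List A) := {z | z.length = N ∧ 2 ≤ z.count a ∧ Dz Perms S a z} with hG1
  have hG1sub : ∀ z ∈ G1, z.length = N ∧ 2 ≤ z.count a ∧ Dz Perms S a z := fun z hz => hz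
  have hG1ae : ∀ᵐ ω ∂P, Z ω ∈ G1 := by
    filter_upwards [hlen, hocc, hdist] with ω h1 h2 h3
    exact ⟨h1, h2, h3⟩
  have hG1inv : ∀ z ∈ G1, ∀ π : Perms (numABlocks a z),
      blockPermute a z (π : Equiv.Perm (Fin (numABlocks a z))) ∈ G1 := by
    intro z hz π
    obtain ⟨h1, h2, h3⟩ := hz
    have hz1 : 1 ≤ z.count a := by omega
    refine ⟨?_, ?_, Dz_blockPermute Perms S a z hz1 h3 π⟩
    · rw [length_blockPermute a z hz1]; exact h1
    · rw [count_blockPermute a z hz1]; exact h2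
  have hPX1 := key_prob P Perms S a N Z hZmeas hinv α ⟨hα0, hα1⟩ G1 hG1sub hG1ae hG1inv
  have htot1 := tsum_G_one P Z hZmeas G1 hG1ae
  -- coefficient as an ofReal
  have hcoefR : ∀ z : List A,
      (⌊α * (Fintype.card (Perms (numABlocks a z)) : ℝ)⌋₊ : ℝ≥0∞)
        * (Fintype.card (Perms (numABlocks a z)) : ℝ≥0∞)⁻¹ =
      ENNReal.ofReal ((⌊α * (Fintype.card (Perms (numABlocks a z)) : ℝ)⌋₊ : ℝ)
        / (Fintype.card (Perms (numABlocks a z)) : ℝ)) := by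
    intro z
    have hnR : (0:ℝ) < (Fintype.card (Perms (numABlocks a z)) : ℝ) := by
      exact_mod_cast (Fintype.card_pos : 0 < Fintype.card (Perms (numABlocks a z)))
    rw [ENNReal.ofReal_div_of_pos hnR, ENNReal.ofReal_natCast, ENNReal.ofReal_natCast,
      div_eq_mul_inv]
  have hcoef_le : ∀ z : List A,
      (⌊α * (Fintype.card (Perms (numABlocks a z)) : ℝ)⌋₊ : ℝ≥0∞)
        * (Fintype.card (Perms (numABlocks a z)) : ℝ≥0∞)⁻¹ ≤ ENNReal.ofReal α := by
    intro z
    have hnR : (0:ℝ) < (Fintype.card (Perms (numABlocks a z)) : ℝ) := by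
      exact_mod_cast (Fintype.card_pos : 0 < Fintype.card (Perms (numABlocks a z)))
    rw [hcoefR z]
    apply ENNReal.ofReal_le_ofReal
    rw [div_le_iff₀ hnR]
    exact Nat.floor_le (mul_nonneg hα0.le hnR.le)
  have hPXle : P X ≤ ENNReal.ofReal α := by
    rw [hPX1]
    calc (∑' (z : G1), (⌊α * (Fintype.card (Perms (numABlocks a (z : List A))) : ℝ)⌋₊ : ℝ≥0∞)
        * (Fintype.card (Perms (numABlocks a (z : List A))) : ℝ≥0∞)⁻¹
        * P {ω | Z ω = (z : List A)})
        ≤ ∑' (z : G1), ENNReal.ofReal α * P {ω | Z ω = (z : List A)} :=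
          ENNReal.tsum_le_tsum (fun z => mul_le_mul_left (hcoef_le (z : List A)) _)
      _ = ENNReal.ofReal α * ∑' (z : G1), P {ω | Z ω = (z : List A)} := ENNReal.tsum_mul_left
      _ = ENNReal.ofReal α := by rw [htot1, mul_one]
  have htoX : (P X).toReal ≤ α := by
    have h := ENNReal.toReal_mono ENNReal.ofReal_ne_top hPXle
    rwa [ENNReal.toReal_ofReal hα0.le] at h
  constructor
  · show 1 - α ≤ (P Y).toReal
    rw [hPY1]
    linarith
  · intro m hm hmae
    show (P Y).toReal ≤ 1 - α + 1 / (m : ℝ)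
    set G2 : Set (List A) := G1 ∩ {z | m ≤ Fintype.card (Perms (numABlocks a z))} with hG2
    have hG2sub : ∀ z ∈ G2, z.length = N ∧ 2 ≤ z.count a ∧ Dz Perms S a z :=
      fun z hz => hG1sub z hz.1
    have hG2ae : ∀ᵐ ω ∂P, Z ω ∈ G2 := by
      filter_upwards [hG1ae, hmae] with ω h1 h2
      exact ⟨h1, h2⟩
    have hG2inv : ∀ z ∈ G2, ∀ π : Perms (numABlocks a z),
        blockPermute a z (π : Equiv.Perm (Fin (numABlocks a z))) ∈ G2 := by
      intro z hz π
      have hz1 : 1 ≤ z.count a := by have := (hG1sub z hz.1).2.1; omega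
      refine ⟨hG1inv z hz.1 π, ?_⟩
      show m ≤ Fintype.card (Perms (numABlocks a (blockPermute a z
        (π : Equiv.Perm (Fin (numABlocks a z))))))
      exact le_trans hz.2 (le_of_eq (card_perms_congr Perms (numABlocks_blockPermute a z hz1
        (π : Equiv.Perm (Fin (numABlocks a z))))))
    have hPX2 := key_prob P Perms S a N Z hZmeas hinv α ⟨hα0, hα1⟩ G2 hG2sub hG2ae hG2inv
    have htot2 := tsum_G_one P Z hZmeas G2 hG2ae
    have hmR : (0:ℝ) < (m : ℝ) := by exact_mod_cast hm
    have hcoef_ge : ∀ z : List A, z ∈ G2 →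
        ENNReal.ofReal (α - 1 / (m : ℝ)) ≤
        (⌊α * (Fintype.card (Perms (numABlocks a z)) : ℝ)⌋₊ : ℝ≥0∞)
          * (Fintype.card (Perms (numABlocks a z)) : ℝ≥0∞)⁻¹ := by
      intro z hz
      have hmn : m ≤ Fintype.card (Perms (numABlocks a z)) := hz.2
      have hnR : (0:ℝ) < (Fintype.card (Perms (numABlocks a z)) : ℝ) := by
        exact_mod_cast (Fintype.card_pos : 0 < Fintype.card (Perms (numABlocks a z)))
      rw [hcoefR z]
      apply ENNReal.ofReal_le_ofReal
      rw [le_div_iff₀ hnR]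
      have hfl : α * (Fintype.card (Perms (numABlocks a z)) : ℝ) - 1 <
          (⌊α * (Fintype.card (Perms (numABlocks a z)) : ℝ)⌋₊ : ℝ) :=
        Nat.sub_one_lt_floor _
      have hdivge : (1:ℝ) ≤ (Fintype.card (Perms (numABlocks a z)) : ℝ) / (m : ℝ) := by
        rw [le_div_iff₀ hmR, one_mul]
        exact_mod_cast hmn
      have hexpand : (α - 1 / (m : ℝ)) * (Fintype.card (Perms (numABlocks a z)) : ℝ) =
          α * (Fintype.card (Perms (numABlocks a z)) : ℝ) -
            (Fintype.card (Perms (numABlocks a z)) : ℝ) / (m : ℝ) := by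
        field_simp
      rw [hexpand]
      linarith
    have hPXge : ENNReal.ofReal (α - 1 / (m : ℝ)) ≤ P X := by
      rw [hPX2]
      calc ENNReal.ofReal (α - 1 / (m : ℝ))
          = ENNReal.ofReal (α - 1 / (m : ℝ)) * ∑' (z : G2), P {ω | Z ω = (z : List A)} := by
            rw [htot2, mul_one]
        _ = ∑' (z : G2), ENNReal.ofReal (α - 1 / (m : ℝ)) * P {ω | Z ω = (z : List A)} :=
            ENNReal.tsum_mul_left.symm
        _ ≤ ∑' (z : G2), (⌊α * (Fintype.card (Perms (numABlocks a (z : List A))) : ℝ)⌋₊ : ℝ≥0∞)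
            * (Fintype.card (Perms (numABlocks a (z : List A))) : ℝ≥0∞)⁻¹
            * P {ω | Z ω = (z : List A)} :=
            ENNReal.tsum_le_tsum (fun z => mul_le_mul_left (hcoef_ge (z : List A) z.2) _)
    have h := ENNReal.toReal_mono hPXne hPXge
    rcases le_or_gt 0 (α - 1 / (m : ℝ)) with hx | hx
    · rw [ENNReal.toReal_ofReal hx] at h
      rw [hPY1]
      linarith
    · have h0 : (0:ℝ) ≤ (P X).toReal := ENNReal.toReal_nonneg
      rw [hPY1]
      linarith
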